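/- Let f₀(x) = x/2 and f₁(x) = x/2 + 1/2 on [0,1], let F¹ = {f₀, f₁}, F² = {f₀}, F³ = {f₁}, with the translation vector of F² identified with a₀ of F¹ and that of F³ identified with a₁ of F¹ (so the translation data is a ∈ ℝ²). Then there exists a code tree ω over {F¹, F², F³} such that at the original parameter the attractor is A^ω = {0} ∪ {1/n : n ∈ ℕ}, the natural pressure p^ω(α) exists for all α ≥ 0 and has its unique zero at α = 1/2, yet for every a ∈ ℝ² the attractor A_a^ω is countable and hence dim_H(A_a^ω) = dim_P(A_a^ω) = 0; in particular the Hausdorff and packing dimensions differ from the zero of the pressure for every translation vector. -/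

import Mathlib

open MeasureTheory Filter Set Topology
open scoped ENNReal Topology

noncomputable section

namespace CodeTreeFractal

variable {Λ : Type*}

/-- The word formed by the first `k` letters of an infinite path `i`. -/
def word (i : ℕ → ℕ) (k : ℕ) : List ℕ := (List.range k).map i

/-- `w` belongs to the tree `Σ_*^ω` determined by the branching numbers `Mlam`
and the code tree `ω`. (Letters are indexed from `0`.) -/
def IsNode (Mlam : Λ → ℕ) (ω : List ℕ → Λ) (w : List ℕ) : Prop :=
  ∀ j : Fin w.length, w.get j < Mlam (ω (w.take j))

/-- `i` is an infinite path of `Σ^ω`. -/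
def IsPath (Mlam : Λ → ℕ) (ω : List ℕ → Λ) (i : ℕ → ℕ) : Prop :=
  ∀ k, i k < Mlam (ω (word i k))

/-- The cylinder of infinite sequences beginning with the word `w`. -/
def cylinder (w : List ℕ) : Set (ℕ → ℕ) := {i | word i w.length = w}

/-- The set `Σ^ω` of infinite paths. -/
def pathSet (Mlam : Λ → ℕ) (ω : List ℕ → Λ) : Set (ℕ → ℕ) := {i | IsPath Mlam ω i}

/-- The product of the linear parts (contraction coefficients on `ℝ`) along a word. -/
def prodc (r : Λ → ℕ → ℝ) : (List ℕ → Λ) → List ℕ → ℝ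
  | _, [] => 1
  | ω, l :: w => r (ω []) l * prodc r (fun u => ω (l :: u)) w

/-- The singular value function on `ℝ` : `Φ^α(T) = |T|^α`. -/
def Phi1 (c : ℝ) (α : ℝ) : ℝ := |c| ^ α

/-- The sum `S^ω(k, α)` over the level-`k` nodes. -/
def S1 (Mlam : Λ → ℕ) (r : Λ → ℕ → ℝ) (ω : List ℕ → Λ) (k : ℕ) (α : ℝ) : ℝ :=
  ∑' w : {w : List ℕ // w.length = k ∧ IsNode Mlam ω w}, Phi1 (prodc r ω w.1) α

/-- The lower pressure `p_inf^ω(α)`. -/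
def pinf1 (Mlam : Λ → ℕ) (r : Λ → ℕ → ℝ) (ω : List ℕ → Λ) (α : ℝ) : ℝ :=
  liminf (fun k : ℕ => Real.log (S1 Mlam r ω k α) / k) atTop

/-- The upper pressure `p_sup^ω(α)`. -/
def psup1 (Mlam : Λ → ℕ) (r : Λ → ℕ → ℝ) (ω : List ℕ → Λ) (α : ℝ) : ℝ :=
  limsup (fun k : ℕ => Real.log (S1 Mlam r ω k α) / k) atTop

/-- The natural projection `Z_a^ω` on `ℝ`. -/
def Z1 (r : Λ → ℕ → ℝ) (tr : Λ → ℕ → ℝ) (ω : List ℕ → Λ) (i : ℕ → ℕ) : ℝ :=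
  ∑' k : ℕ, prodc r ω (word i k) * tr (ω (word i k)) (i k)

/-- The code tree fractal `A_a^ω ⊆ ℝ`. -/
def attractor1 (Mlam : Λ → ℕ) (r : Λ → ℕ → ℝ) (tr : Λ → ℕ → ℝ)
    (ω : List ℕ → Λ) : Set ℝ :=
  {x | ∃ i : ℕ → ℕ, IsPath Mlam ω i ∧ Z1 r tr ω i = x}

/-- The stage-`j` covering sums defining the natural measure `M_j^α(Σ^ω)`. -/
def natStage1 (Mlam : Λ → ℕ) (r : Λ → ℕ → ℝ) (ω : List ℕ → Λ)
    (α : ℝ) (j : ℕ) : ℝ≥0∞ :=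
  ⨅ (J : Set (List ℕ)) (_ : ∀ w ∈ J, IsNode Mlam ω w ∧ j ≤ w.length)
    (_ : pathSet Mlam ω ⊆ ⋃ w ∈ J, cylinder w),
    ∑' w : J, ENNReal.ofReal (Phi1 (prodc r ω w.1) α)

/-- The natural measure `M^α(Σ^ω)`. -/
def natMeasure1 (Mlam : Λ → ℕ) (r : Λ → ℕ → ℝ) (ω : List ℕ → Λ) (α : ℝ) : ℝ≥0∞ :=
  ⨆ j : ℕ, natStage1 Mlam r ω α j

/-- The affinity dimension `d^ω = inf {α ≥ 0 : M^α(Σ^ω) = 0}`. -/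
def affinityDim1 (Mlam : Λ → ℕ) (r : Λ → ℕ → ℝ) (ω : List ℕ → Λ) : ℝ :=
  sInf {α : ℝ | 0 ≤ α ∧ natMeasure1 Mlam r ω α = 0}

/-- The `ε`-covering number of a subset of `ℝ` (by closed balls of radius `ε`). -/
def covNum (A' : Set ℝ) (ε : ℝ) : ℝ≥0∞ :=
  ⨅ (s : Finset ℝ) (_ : A' ⊆ ⋃ c ∈ s, Metric.closedBall c ε), (s.card : ℝ≥0∞)

/-- The upper box counting (Minkowski) dimension of a subset of `ℝ`. -/
def uboxDim (A' : Set ℝ) : ℝ :=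
  limsup (fun ε : ℝ => Real.log (covNum A' ε).toReal / -Real.log ε)
    (nhdsWithin 0 (Set.Ioi 0))

/-- The packing dimension of a subset of `ℝ`, via the standard characterization
as the infimum over countable covers (by bounded sets) of the supremum of the
upper box dimensions of the pieces. -/
def packingDim (A' : Set ℝ) : ℝ :=
  sInf {s : ℝ | ∃ Es : ℕ → Set ℝ, (∀ n, Bornology.IsBounded (Es n)) ∧
    A' ⊆ ⋃ n, Es n ∧ ∀ n, uboxDim (Es n) ≤ s}


/-! ### Auxiliary development for statement7 -/

section Aux

lemma key_decomp (M n : ℕ) (h : 0 < n) :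
    ∃ q t, t < 2 ∧ M / n = q ∧ (2 * M + 1) / n = 2 * q + t := by
  refine ⟨M / n, (2 * (M % n) + 1) / n, ?_, rfl, ?_⟩
  · rw [Nat.div_lt_iff_lt_mul h]; have := Nat.mod_lt M h; omega
  · have hd := Nat.div_add_mod M n
    have e1 : n * (2 * (M / n)) = 2 * (n * (M / n)) := by ring
    have h1 : 2 * M + 1 = n * (2 * (M / n)) + (2 * (M % n) + 1) := by omega
    rw [h1, Nat.mul_add_div h]

/-- `(2M+1)/n/2 = M/n` in ℕ. -/
lemma div2_div (M n : ℕ) : (2 * M + 1) / n / 2 = M / n := by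
  rcases Nat.eq_zero_or_pos n with h | h
  · simp [h]
  obtain ⟨q, t, ht, h1, h2⟩ := key_decomp M n h
  rw [h1, h2]; omega

/-- The child values. -/
lemma div2_child (M n : ℕ) (h : 0 < n) :
    (2 * M + 1) / n = 2 * (M / n) ∨ (2 * M + 1) / n = 2 * (M / n) + 1 := by
  obtain ⟨q, t, ht, h1, h2⟩ := key_decomp M n h
  rw [h1, h2]; omega

/-- Canonical index. -/
lemma canon (M c : ℕ) (h : ∃ n, 1 ≤ n ∧ M / n = c) (hc : 1 ≤ c) : M / (M / c) = c := by
  obtain ⟨n, hn, hMn⟩ := h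
  have hnc : n ≤ M / c := by
    rw [Nat.le_div_iff_mul_le hc, mul_comm]
    calc c * n = M / n * n := by rw [hMn]
    _ ≤ M := Nat.div_mul_le_self M n
  have h1 : M / (M / c) ≤ c := by
    calc M / (M / c) ≤ M / n := Nat.div_le_div_left hnc hn
    _ = c := hMn
  have h2 : c ≤ M / (M / c) := by
    have hMc : 0 < M / c := lt_of_lt_of_le hn hnc
    rw [Nat.le_div_iff_mul_le hMc]
    calc c * (M / c) = M / c * c := by ring
    _ ≤ M := Nat.div_mul_le_self M c
  omega

/-- `Mk k = 2^k - 1`. -/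
def Mk (k : ℕ) : ℕ := 2 ^ k - 1

lemma Mk_succ (k : ℕ) : Mk (k + 1) = 2 * Mk k + 1 := by
  have : 1 ≤ 2 ^ k := Nat.one_le_two_pow
  simp only [Mk, pow_succ]; omega

/-- The set of level-`k` values. -/
def D (k : ℕ) : Finset ℕ := (Finset.Icc 1 (2 ^ k)).image fun n => Mk k / n

lemma mem_D {k d : ℕ} : d ∈ D k ↔ ∃ n, 1 ≤ n ∧ n ≤ 2 ^ k ∧ Mk k / n = d := by
  simp [D, Finset.mem_image, Finset.mem_Icc, and_assoc]

lemma zero_mem_D (k : ℕ) : 0 ∈ D k := by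
  have h1 : (1:ℕ) ≤ 2 ^ k := Nat.one_le_two_pow
  exact mem_D.2 ⟨2 ^ k, h1, le_refl _, Nat.div_eq_of_lt (by simp only [Mk]; omega)⟩

lemma MkDiv_mem_D (k n : ℕ) (hn : 1 ≤ n) : Mk k / n ∈ D k := by
  rcases le_or_gt n (2 ^ k) with h | h
  · exact mem_D.2 ⟨n, hn, h, rfl⟩
  · have h1 : (1:ℕ) ≤ 2 ^ k := Nat.one_le_two_pow
    have : Mk k / n = 0 := Nat.div_eq_of_lt (by simp only [Mk]; omega)
    rw [this]; exact zero_mem_D k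

lemma parent_mem_D {k d : ℕ} (h : d ∈ D (k + 1)) : d / 2 ∈ D k := by
  obtain ⟨n, hn1, hn2, hnd⟩ := mem_D.1 h
  have : Mk (k + 1) / n / 2 = Mk k / n := by rw [Mk_succ]; exact div2_div _ _
  rw [← hnd, this]
  exact MkDiv_mem_D k n hn1

lemma child_mem_D {k c : ℕ} (h : c ∈ D k) :
    2 * c ∈ D (k + 1) ∨ 2 * c + 1 ∈ D (k + 1) := by
  obtain ⟨n, hn1, hn2, hnd⟩ := mem_D.1 h
  have h2 : n ≤ 2 ^ (k + 1) := le_trans hn2 (by rw [pow_succ]; omega)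
  rcases div2_child (Mk k) n hn1 with h' | h'
  · left; exact mem_D.2 ⟨n, hn1, h2, by rw [Mk_succ, h', hnd]⟩
  · right; exact mem_D.2 ⟨n, hn1, h2, by rw [Mk_succ, h', hnd]⟩

/-- The bit taken at depth `j` from cumulative value `c` with letter `l`. -/
def stepBit (j c l : ℕ) : ℕ :=
  if 2 * c ∈ D (j + 1) then (if 2 * c + 1 ∈ D (j + 1) then min l 1 else 0) else 1

lemma stepBit_le (j c l : ℕ) : stepBit j c l ≤ 1 := by
  unfold stepBit
  by_cases hA : 2 * c ∈ D (j + 1) <;> by_cases hB : 2 * c + 1 ∈ D (j + 1) <;>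
    simp [hA, hB] <;> omega

def cwAux : ℕ → ℕ → List ℕ → ℕ
  | _, c, [] => c
  | j, c, l :: w => cwAux (j + 1) (2 * c + stepBit j c l) w

lemma cwAux_append (j c : ℕ) (w : List ℕ) (l : ℕ) :
    cwAux j c (w ++ [l]) =
      2 * cwAux j c w + stepBit (j + w.length) (cwAux j c w) l := by
  induction w generalizing j c with
  | nil => simp [cwAux]
  | cons l' w ih =>
      simp only [List.cons_append, cwAux, List.length_cons]
      rw [show j + (w.length + 1) = j + 1 + w.length from by omega]
      exact ih _ _

def cw (w : List ℕ) : ℕ := cwAux 0 0 w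

lemma cw_nil : cw ([] : List ℕ) = 0 := rfl

lemma cw_append (w : List ℕ) (l : ℕ) :
    cw (w ++ [l]) = 2 * cw w + stepBit w.length (cw w) l := by
  simpa [cw] using cwAux_append 0 0 w l

/-- The code tree. -/
def om (w : List ℕ) : Fin 3 :=
  if 2 * cw w ∈ D (w.length + 1) then
    (if 2 * cw w + 1 ∈ D (w.length + 1) then 0 else 1) else 2

/-- Branching numbers. -/
def Mfun : Fin 3 → ℕ := fun l => if l = 0 then 2 else 1

lemma one_le_Mfun (l : Fin 3) : 1 ≤ Mfun l := by
  unfold Mfun; split <;> omega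

lemma step_mem (j c l : ℕ) (h : c ∈ D j) :
    2 * c + stepBit j c l ∈ D (j + 1) := by
  have hm : min l 1 = 0 ∨ min l 1 = 1 := by omega
  unfold stepBit
  by_cases hA : 2 * c ∈ D (j + 1)
  · by_cases hB : 2 * c + 1 ∈ D (j + 1)
    · rw [if_pos hA, if_pos hB]
      rcases hm with h' | h' <;> rw [h']
      · simpa using hA
      · exact hB
    · rw [if_pos hA, if_neg hB]; simpa using hA
  · rw [if_neg hA]
    rcases child_mem_D h with h0 | h1
    · exact absurd h0 hA
    · exact h1

lemma isNode_nil (Mlam : Λ → ℕ) (ω : List ℕ → Λ) : IsNode Mlam ω [] := by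
  intro j; exact absurd j.2 (by simp)

lemma isNode_append {Mlam : Λ → ℕ} {ω : List ℕ → Λ} {w : List ℕ} {l : ℕ} :
    IsNode Mlam ω (w ++ [l]) ↔ IsNode Mlam ω w ∧ l < Mlam (ω w) := by
  constructor
  · intro h
    constructor
    · intro j
      have hj : (j : ℕ) < (w ++ [l]).length := by simp
      have := h ⟨j, hj⟩
      simp only [List.get_eq_getElem] at this ⊢
      rwa [List.getElem_append_left j.2,
        List.take_append_of_le_length (le_of_lt j.2)] at this
    · have hl : w.length < (w ++ [l]).length := by simp
      have := h ⟨w.length, hl⟩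
      simp only [List.get_eq_getElem] at this
      rw [List.getElem_append_right (le_refl _), List.take_left' rfl] at this
      simpa using this
  · rintro ⟨h1, h2⟩ j
    rcases lt_or_ge (j : ℕ) w.length with hj | hj
    · have := h1 ⟨j, hj⟩
      simp only [List.get_eq_getElem] at this ⊢
      rwa [List.getElem_append_left hj,
        List.take_append_of_le_length (le_of_lt hj)]
    · have hj' : (j : ℕ) = w.length := by
        have := j.2; simp at this; omega
      simp only [List.get_eq_getElem]
      rw [List.getElem_append_right hj]
      have ht : (w ++ [l]).take (j : ℕ) = w := by
        rw [hj']; exact List.take_left' rfl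
      rw [ht]
      have hz : (j : ℕ) - w.length = 0 := by omega
      simpa [hz] using h2

end Aux


section Nodes

/-- Reconstruction of the word from its value. -/
def wd : ℕ → ℕ → List ℕ
  | 0, _ => []
  | k + 1, d => wd k (d / 2) ++ [if om (wd k (d / 2)) = 0 then d % 2 else 0]

lemma wd_length (k d : ℕ) : (wd k d).length = k := by
  induction k generalizing d with
  | zero => rfl
  | succ k ih => simp [wd, ih]

/-- Main correspondence, upward direction. -/
lemma wd_spec {k d : ℕ} (hd : d ∈ D k) :
    cw (wd k d) = d ∧ IsNode Mfun om (wd k d) := by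
  induction k generalizing d with
  | zero =>
      have : d = 0 := by
        obtain ⟨n, hn1, hn2, hnd⟩ := mem_D.1 hd
        interval_cases n
        · simpa [Mk] using hnd.symm
      exact ⟨by simp [wd, cw_nil, this], isNode_nil _ _⟩
  | succ k ih =>
      have hpar : d / 2 ∈ D k := parent_mem_D hd
      obtain ⟨hcw, hnode⟩ := ih hpar
      set w := wd k (d / 2) with hw
      have hlen : w.length = k := wd_length k (d / 2)
      set l : ℕ := if om w = 0 then d % 2 else 0 with hl
      have hshow : wd (k + 1) d = w ++ [l] := rfl
      -- compute the new bit
      have hstep : 2 * (d / 2) + stepBit k (d / 2) l = d ∧ l < Mfun (om w) := by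
        have hd2 : d = 2 * (d / 2) + d % 2 := by omega
        have hm2 : d % 2 < 2 := by omega
        by_cases hA : 2 * (d / 2) ∈ D (k + 1)
        · by_cases hB : 2 * (d / 2) + 1 ∈ D (k + 1)
          · have hom : om w = 0 := by
              unfold om; rw [hlen, hcw, if_pos hA, if_pos hB]
            have hll : l = d % 2 := by rw [hl, if_pos hom]
            have : stepBit k (d / 2) l = d % 2 := by
              unfold stepBit; rw [if_pos hA, if_pos hB, hll]; omega
            refine ⟨by omega, ?_⟩
            rw [hom, hll]; simpa [Mfun] using hm2
          · have hom : om w = 1 := by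
              unfold om; rw [hlen, hcw, if_pos hA, if_neg hB]
            have hll : l = 0 := by rw [hl, hom]; simp
            have hsb : stepBit k (d / 2) l = 0 := by
              unfold stepBit; rw [if_pos hA, if_neg hB]
            have heven : d % 2 = 0 := by
              by_contra hcon
              have : d = 2 * (d / 2) + 1 := by omega
              exact hB (by rw [← this]; exact hd)
            refine ⟨by omega, ?_⟩
            rw [hom, hll]; simp [Mfun]
        · have hom : om w = 2 := by
            unfold om; rw [hlen, hcw, if_neg hA]
          have hll : l = 0 := by rw [hl, hom]; simp
          have hsb : stepBit k (d / 2) l = 1 := by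
            unfold stepBit; rw [if_neg hA]
          have hodd : d % 2 = 1 := by
            by_contra hcon
            have : d = 2 * (d / 2) := by omega
            exact hA (by rw [← this]; exact hd)
          refine ⟨by omega, ?_⟩
          rw [hom, hll]; simp [Mfun]
      refine ⟨?_, ?_⟩
      · rw [hshow, cw_append, hcw, hlen, hstep.1]
      · rw [hshow, isNode_append]; exact ⟨hnode, hstep.2⟩

end Nodes
section Nodes2

lemma node_cw_mem {w : List ℕ} (h : IsNode Mfun om w) : cw w ∈ D w.length := by
  induction w using List.reverseRecOn with
  | nil => simpa [cw_nil] using zero_mem_D 0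
  | append_singleton w l ih =>
      obtain ⟨h1, h2⟩ := isNode_append.1 h
      rw [cw_append]
      simp only [List.length_append, List.length_singleton]
      exact step_mem _ _ _ (ih h1)

lemma wd_cw {w : List ℕ} (h : IsNode Mfun om w) : wd w.length (cw w) = w := by
  induction w using List.reverseRecOn with
  | nil => rfl
  | append_singleton w l ih =>
      obtain ⟨h1, h2⟩ := isNode_append.1 h
      have hsb := stepBit_le w.length (cw w) l
      have hcw : cw (w ++ [l]) = 2 * cw w + stepBit w.length (cw w) l := cw_append w l
      have hhalf : cw (w ++ [l]) / 2 = cw w := by omega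
      have hlen : (w ++ [l]).length = w.length + 1 := by simp
      rw [hlen]
      show wd w.length (cw (w ++ [l]) / 2) ++ [_] = w ++ [l]
      rw [hhalf, ih h1]
      congr 1
      have hmod : cw (w ++ [l]) % 2 = stepBit w.length (cw w) l := by omega
      by_cases hom : om w = 0
      · rw [if_pos hom, hmod]
        have hl2 : l < 2 := by simpa [Mfun, hom] using h2
        have : stepBit w.length (cw w) l = l := by
          unfold om at hom
          unfold stepBit
          by_cases hA : 2 * cw w ∈ D (w.length + 1)
          · by_cases hB : 2 * cw w + 1 ∈ D (w.length + 1)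
            · rw [if_pos hA, if_pos hB]; omega
            · rw [if_pos hA, if_neg hB] at hom ⊢; exact absurd hom (by decide)
          · rw [if_neg hA] at hom; exact absurd hom (by decide)
        rw [this]
      · rw [if_neg hom]
        have : l = 0 := by
          have := h2; unfold Mfun at this; rw [if_neg hom] at this; omega
        rw [this]

/-- The level-`k` nodes are equinumerous with `D k`. -/
def nodeEquiv (k : ℕ) :
    {w : List ℕ // w.length = k ∧ IsNode Mfun om w} ≃ {d : ℕ // d ∈ D k} where
  toFun w := ⟨cw w.1, by rcases w with ⟨w, rfl, hn⟩; exact node_cw_mem hn⟩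
  invFun d := ⟨wd k d.1, wd_length k d.1, (wd_spec d.2).2⟩
  left_inv := by rintro ⟨w, rfl, hn⟩; simp [wd_cw hn]
  right_inv := by rintro ⟨d, hd⟩; simp [(wd_spec hd).1]

end Nodes2
section Paths

lemma word_zero (i : ℕ → ℕ) : word i 0 = [] := rfl

lemma word_succ (i : ℕ → ℕ) (k : ℕ) : word i (k + 1) = word i k ++ [i k] := by
  simp [word, List.range_succ]

lemma word_length (i : ℕ → ℕ) (k : ℕ) : (word i k).length = k := by simp [word]

/-- The value sequence of a path. -/
def cseq (i : ℕ → ℕ) (k : ℕ) : ℕ := cw (word i k)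

lemma cseq_zero (i : ℕ → ℕ) : cseq i 0 = 0 := rfl

lemma cseq_succ (i : ℕ → ℕ) (k : ℕ) :
    cseq i (k + 1) = 2 * cseq i k + stepBit k (cseq i k) (i k) := by
  unfold cseq
  rw [word_succ, cw_append, word_length]

lemma path_word_isNode {i : ℕ → ℕ} (h : IsPath Mfun om i) (k : ℕ) :
    IsNode Mfun om (word i k) := by
  induction k with
  | zero => exact isNode_nil _ _
  | succ k ih => rw [word_succ, isNode_append]; exact ⟨ih, h k⟩

lemma path_cseq_mem {i : ℕ → ℕ} (h : IsPath Mfun om i) (k : ℕ) :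
    cseq i k ∈ D k := by
  have := node_cw_mem (path_word_isNode h k)
  rwa [word_length] at this

/-- halving along cseq -/
lemma cseq_half (i : ℕ → ℕ) (k : ℕ) : cseq i (k + 1) / 2 = cseq i k := by
  have := stepBit_le k (cseq i k) (i k)
  have h := cseq_succ i k
  omega

lemma MkDiv_half (n k : ℕ) : Mk (k + 1) / n / 2 = Mk k / n := by
  rw [Mk_succ]; exact div2_div _ _

/-- downward propagation of the identification -/
lemma cseq_down {i : ℕ → ℕ} {n : ℕ} :
    ∀ k, cseq i k = Mk k / n → ∀ j, j ≤ k → cseq i j = Mk j / n := by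
  intro k
  induction k with
  | zero =>
      intro h j hj
      have : j = 0 := by omega
      rw [this]; exact h
  | succ k ih =>
      intro h j hj
      rcases Nat.eq_or_lt_of_le hj with rfl | hj'
      · exact h
      · have hk : cseq i k = Mk k / n := by
          rw [← cseq_half i k, h, MkDiv_half]
        exact ih hk j (by omega)

/-- Classification of paths. -/
lemma path_classify {i : ℕ → ℕ} (h : IsPath Mfun om i) :
    (∀ k, cseq i k = 0) ∨ ∃ n, 1 ≤ n ∧ ∀ k, cseq i k = Mk k / n := by
  by_cases h0 : ∀ k, cseq i k = 0
  · exact Or.inl h0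
  right
  push_neg at h0
  -- the canonical index sequence is antitone where defined
  -- key: for every k with cseq i k ≠ 0 define n'_k = Mk k / cseq i k
  obtain ⟨k₀, hk₀⟩ := h0
  have hk₀1 : 1 ≤ cseq i k₀ := by omega
  have hpos : ∀ k, k₀ ≤ k → 1 ≤ cseq i k := by
    intro k hk
    induction k, hk using Nat.le_induction with
    | base => exact hk₀1
    | succ k hk ih =>
        have := cseq_succ i k
        omega
  -- canonical identity
  have hcanon : ∀ k, 1 ≤ cseq i k → Mk k / (Mk k / cseq i k) = cseq i k := by
    intro k hk
    obtain ⟨n, hn1, hn2, hnd⟩ := mem_D.1 (path_cseq_mem h k)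
    exact canon _ _ ⟨n, hn1, hnd⟩ hk
  -- antitone
  have hanti : ∀ k, k₀ ≤ k → Mk (k + 1) / cseq i (k + 1) ≤ Mk k / cseq i k := by
    intro k hk
    have h1 : 1 ≤ cseq i k := hpos k hk
    have hup : 2 * cseq i k ≤ cseq i (k + 1) := by
      have := cseq_succ i k; omega
    calc Mk (k + 1) / cseq i (k + 1) ≤ Mk (k + 1) / (2 * cseq i k) :=
          Nat.div_le_div_left hup (by omega)
    _ = Mk (k + 1) / cseq i k / 2 := by rw [Nat.div_div_eq_div_mul, mul_comm]
    _ = (2 * Mk k + 1) / cseq i k / 2 := by rw [Mk_succ]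
    _ = Mk k / cseq i k := div2_div _ _
  -- antitone ℕ sequence: take the minimum value
  have hanti' : ∀ j k, k₀ ≤ j → j ≤ k → Mk k / cseq i k ≤ Mk j / cseq i j := by
    intro j k hj hjk
    induction k, hjk using Nat.le_induction with
    | base => exact le_refl _
    | succ k hjk ih => exact le_trans (hanti k (by omega)) ih
  -- minimum of the canonical indices
  set S : Set ℕ := {m | ∃ k, k₀ ≤ k ∧ Mk k / cseq i k = m} with hS
  have hSne : S.Nonempty := ⟨Mk k₀ / cseq i k₀, k₀, le_refl _, rfl⟩
  obtain ⟨K₁, hK₁, hK₁v⟩ : ∃ k, k₀ ≤ k ∧ Mk k / cseq i k = sInf S := Nat.sInf_mem hSne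
  set n := sInf S with hn
  have hn1 : 1 ≤ n := by
    rw [← hK₁v]
    have hc1 : 1 ≤ cseq i K₁ := hpos K₁ hK₁
    have hcle : cseq i K₁ ≤ Mk K₁ := by
      obtain ⟨n', _, _, hnd⟩ := mem_D.1 (path_cseq_mem h K₁)
      rw [← hnd]; exact Nat.div_le_self _ _
    exact (Nat.one_le_div_iff hc1).2 hcle
  refine ⟨n, hn1, ?_⟩
  have hup : ∀ k, K₁ ≤ k → cseq i k = Mk k / n := by
    intro k hk
    have h1 : Mk k / cseq i k ≤ n := by rw [← hK₁v]; exact hanti' K₁ k hK₁ hk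
    have h2 : n ≤ Mk k / cseq i k := Nat.sInf_le ⟨k, le_trans hK₁ hk, rfl⟩
    have h3 : Mk k / cseq i k = n := by omega
    rw [← h3, hcanon k (hpos k (le_trans hK₁ hk))]
  intro k
  rcases le_or_gt k K₁ with hk | hk
  · exact cseq_down K₁ (hup K₁ (le_refl _)) k hk
  · exact hup k (by omega)

end Paths
section Z1Analysis

/-- the contraction data of the example -/
def rfun : Fin 3 → ℕ → ℝ := fun _ _ => (1 : ℝ) / 2

/-- the translation data of the example -/
def trfun (a : Fin 2 → ℝ) : Fin 3 → ℕ → ℝ := fun l i =>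
  a (if l = 0 then (if i = 0 then 0 else 1) else if l = 1 then 0 else 1)

lemma prodc_const (ω : List ℕ → Fin 3) (w : List ℕ) :
    prodc rfun ω w = (1 / 2 : ℝ) ^ w.length := by
  induction w generalizing ω with
  | nil => simp [prodc]
  | cons l w ih => simp [prodc, rfun, ih, pow_succ]; ring

def bfin (b : ℕ) : Fin 2 := if b = 0 then 0 else 1

lemma trfun_stepBit (a : Fin 2 → ℝ) (i : ℕ → ℕ) (k : ℕ) :
    trfun a (om (word i k)) (i k) = a (bfin (stepBit k (cseq i k) (i k))) := by
  have hlen : (word i k).length = k := word_length i k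
  unfold trfun om stepBit bfin cseq
  rw [hlen]
  by_cases hA : 2 * cw (word i k) ∈ D (k + 1)
  · by_cases hB : 2 * cw (word i k) + 1 ∈ D (k + 1)
    · simp only [if_pos hA, if_pos hB]
      by_cases hi : i k = 0
      · simp [hi]
      · have hmin : min (i k) 1 = 1 := by omega
        simp [hi, hmin]
    · simp only [if_pos hA, if_neg hB]
      simp
  · simp only [if_neg hA]
    simp

/-- the bit sequence of a path -/
def bitSeq (i : ℕ → ℕ) (k : ℕ) : ℕ := stepBit k (cseq i k) (i k)

lemma bitSeq_le (i : ℕ → ℕ) (k : ℕ) : bitSeq i k ≤ 1 := stepBit_le _ _ _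

lemma cseq_succ' (i : ℕ → ℕ) (k : ℕ) :
    cseq i (k + 1) = 2 * cseq i k + bitSeq i k := cseq_succ i k

/-- partial sums -/
lemma partial_sum_eq (i : ℕ → ℕ) (k : ℕ) :
    ∑ j ∈ Finset.range k, (1 / 2 : ℝ) ^ j * ((bitSeq i j : ℝ) / 2)
      = (cseq i k : ℝ) / 2 ^ k := by
  induction k with
  | zero => simp [cseq_zero]
  | succ k ih =>
      rw [Finset.sum_range_succ, ih]
      have h := cseq_succ' i k
      have hc : (cseq i (k + 1) : ℝ) = 2 * (cseq i k : ℝ) + (bitSeq i k : ℝ) := by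
        exact_mod_cast congrArg (Nat.cast : ℕ → ℝ) h
      rw [hc]
      rw [one_div_pow]
      field_simp
      ring

lemma summable_bits (i : ℕ → ℕ) :
    Summable (fun j => (1 / 2 : ℝ) ^ j * ((bitSeq i j : ℝ) / 2)) := by
  apply Summable.of_nonneg_of_le (f := fun j => (1 / 2 : ℝ) ^ j)
  · intro j; positivity
  · intro j
    have h := bitSeq_le i j
    have h1 : ((bitSeq i j : ℝ) / 2) ≤ 1 := by
      have : (bitSeq i j : ℝ) ≤ 1 := by exact_mod_cast h
      linarith
    have h2 : (0:ℝ) ≤ (1 / 2 : ℝ) ^ j := by positivity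
    calc (1 / 2 : ℝ) ^ j * ((bitSeq i j : ℝ) / 2) ≤ (1 / 2 : ℝ) ^ j * 1 := by
          apply mul_le_mul_of_nonneg_left h1 h2
    _ = (1 / 2 : ℝ) ^ j := by ring
  · exact summable_geometric_of_lt_one (by norm_num) (by norm_num)

/-- The `Z1`-value of any path, as a series of bits. -/
lemma Z1_eq_tsum (a : Fin 2 → ℝ) (i : ℕ → ℕ) :
    Z1 rfun (trfun a) om i = ∑' k, (1 / 2 : ℝ) ^ k * trfun a (om (word i k)) (i k) := by
  unfold Z1
  exact tsum_congr fun k => by rw [prodc_const, word_length]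

/-- original translation vector -/
def aOrig : Fin 2 → ℝ := ![0, 1 / 2]

lemma aOrig_bfin (b : ℕ) (hb : b ≤ 1) : aOrig (bfin b) = (b : ℝ) / 2 := by
  interval_cases b
  · simp [aOrig, bfin]
  · simp [aOrig, bfin]

/-- `Z1` at the original parameter equals the limit of `cseq/2^k`. -/
lemma Z1_orig (i : ℕ → ℕ) (x : ℝ)
    (hx : Filter.Tendsto (fun k => (cseq i k : ℝ) / 2 ^ k) atTop (nhds x)) :
    Z1 rfun (trfun aOrig) om i = x := by
  rw [Z1_eq_tsum]
  have he : ∀ k, (1 / 2 : ℝ) ^ k * trfun aOrig (om (word i k)) (i k)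
      = (1 / 2 : ℝ) ^ k * ((bitSeq i k : ℝ) / 2) := by
    intro k
    rw [trfun_stepBit, aOrig_bfin _ (stepBit_le k (cseq i k) (i k))]
    rfl
  rw [tsum_congr he]
  have hsum := (summable_bits i).hasSum
  have h1 := hsum.tendsto_sum_nat
  have h2 : Filter.Tendsto (fun k => ∑ j ∈ Finset.range k,
      (1 / 2 : ℝ) ^ j * ((bitSeq i j : ℝ) / 2)) atTop (nhds x) := by
    have : (fun k => ∑ j ∈ Finset.range k, (1 / 2 : ℝ) ^ j * ((bitSeq i j : ℝ) / 2))
        = fun k => (cseq i k : ℝ) / 2 ^ k := funext fun k => partial_sum_eq i k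
    rw [this]; exact hx
  exact tendsto_nhds_unique h1 h2

/-- `cseq/2^k → 1/n` when `cseq k = Mk k / n`. -/
lemma cseq_tendsto (i : ℕ → ℕ) (n : ℕ) (hn : 1 ≤ n)
    (hc : ∀ k, cseq i k = Mk k / n) :
    Filter.Tendsto (fun k => (cseq i k : ℝ) / 2 ^ k) atTop (nhds (1 / n)) := by
  have key : ∀ k : ℕ, ‖(cseq i k : ℝ) / 2 ^ k - 1 / n‖ ≤ (1 / 2 : ℝ) ^ k := by
    intro k
    obtain ⟨q, r, hr, hqd, hd⟩ : ∃ q r, r < n ∧ Mk k / n = q ∧ Mk k = n * q + r :=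
      ⟨Mk k / n, Mk k % n, Nat.mod_lt _ (by omega), rfl, (Nat.div_add_mod (Mk k) n).symm⟩
    have h2k : (1:ℕ) ≤ 2 ^ k := Nat.one_le_two_pow
    have hMk : (Mk k : ℝ) = 2 ^ k - 1 := by
      simp only [Mk]; push_cast [h2k]; ring
    have hdr : (n : ℝ) * (q : ℝ) + (r : ℝ) = (Mk k : ℝ) := by exact_mod_cast hd.symm
    have hcq : (cseq i k : ℝ) = (q : ℝ) := by rw [hc k, hqd]
    have hnpos : (0:ℝ) < n := by exact_mod_cast hn
    have h2pos : (0:ℝ) < 2 ^ k := by positivity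
    have hval : (cseq i k : ℝ) / 2 ^ k - 1 / n = -((r : ℝ) + 1) / (n * 2 ^ k) := by
      rw [hcq]
      rw [hMk] at hdr
      have e1 : (q : ℝ) * n = 2 ^ k - 1 - r := by linarith
      field_simp
      linear_combination e1
    rw [hval, norm_div, norm_neg]
    have h1 : ‖(r : ℝ) + 1‖ = (r : ℝ) + 1 := by
      rw [Real.norm_eq_abs, abs_of_pos]; positivity
    have h2 : ‖(n : ℝ) * 2 ^ k‖ = (n : ℝ) * 2 ^ k := by
      rw [Real.norm_eq_abs, abs_of_pos]; positivity
    rw [h1, h2, div_le_iff₀ (by positivity)]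
    have hrn : (r : ℝ) + 1 ≤ (n : ℝ) := by exact_mod_cast hr
    calc (r : ℝ) + 1 ≤ (n : ℝ) := hrn
    _ = (1 / 2 : ℝ) ^ k * ((n : ℝ) * 2 ^ k) := by
        rw [one_div, inv_pow]
        field_simp
  have h0 : Filter.Tendsto (fun k => (cseq i k : ℝ) / 2 ^ k - 1 / n) atTop (nhds 0) :=
    squeeze_zero_norm key (tendsto_pow_atTop_nhds_zero_of_lt_one (by norm_num) (by norm_num))
  have := h0.add_const (1 / n : ℝ)
  simpa using this

lemma cseq_tendsto_zero (i : ℕ → ℕ) (hc : ∀ k, cseq i k = 0) :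
    Filter.Tendsto (fun k => (cseq i k : ℝ) / 2 ^ k) atTop (nhds 0) := by
  have : (fun k => (cseq i k : ℝ) / 2 ^ k) = fun _ => (0:ℝ) := by
    funext k; rw [hc k]; simp
  rw [this]; exact tendsto_const_nhds

end Z1Analysis
section PathCon

/-- The all-zero path. -/
def pathZero : ℕ → ℕ := fun _ => 0

lemma isPath_pathZero : IsPath Mfun om pathZero := by
  intro k
  exact Nat.lt_of_lt_of_le Nat.zero_lt_one (one_le_Mfun _)

lemma cseq_pathZero (k : ℕ) : cseq pathZero k = 0 := by
  induction k with
  | zero => rfl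
  | succ k ih =>
      rw [cseq_succ, ih]
      have h0 : (0:ℕ) ∈ D (k + 1) := zero_mem_D (k + 1)
      unfold stepBit
      rw [mul_zero, if_pos h0]
      by_cases hB : (0:ℕ) + 1 ∈ D (k + 1)
      · rw [if_pos hB]; simp [pathZero]
      · rw [if_neg hB]

/-- The path realizing `1/n`. -/
def pathOf (n : ℕ) : ℕ → ℕ := fun k =>
  if om (wd k (Mk k / n)) = 0 then (Mk (k + 1) / n) % 2 else 0

lemma word_pathOf (n : ℕ) (k : ℕ) : word (pathOf n) k = wd k (Mk k / n) := by
  induction k with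
  | zero => rfl
  | succ k ih =>
      rw [word_succ, ih]
      show _ = wd k ((Mk (k+1) / n) / 2) ++ [if om (wd k ((Mk (k+1) / n) / 2)) = 0
        then (Mk (k+1) / n) % 2 else 0]
      rw [MkDiv_half]
      rfl

lemma cseq_pathOf (n : ℕ) (hn : 1 ≤ n) (k : ℕ) : cseq (pathOf n) k = Mk k / n := by
  unfold cseq
  rw [word_pathOf]
  exact (wd_spec (MkDiv_mem_D k n hn)).1

lemma isPath_pathOf (n : ℕ) : IsPath Mfun om (pathOf n) := by
  intro k
  rw [word_pathOf]
  unfold pathOf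
  by_cases h : om (wd k (Mk k / n)) = 0
  · rw [if_pos h, h]
    have : (Mk (k + 1) / n) % 2 < 2 := by omega
    simpa [Mfun] using this
  · rw [if_neg h]
    exact lt_of_lt_of_le one_pos (one_le_Mfun _)

/-- Paths are determined by their value sequences. -/
lemma path_unique {i i' : ℕ → ℕ} (h : IsPath Mfun om i) (h' : IsPath Mfun om i')
    (hc : ∀ k, cseq i k = cseq i' k) : i = i' := by
  have hword : ∀ k, word i k = word i' k := by
    intro k
    induction k with
    | zero => rfl
    | succ k ih =>
        have hb : stepBit k (cseq i' k) (i k) = stepBit k (cseq i' k) (i' k) := by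
          have e1 := cseq_succ i k
          have e2 := cseq_succ i' k
          rw [hc k] at e1
          rw [← hc (k+1)] at e2
          omega
        have homega : om (word i k) = om (word i' k) := by rw [ih]
        have hi := h k
        have hi' := h' k
        rw [homega] at hi
        have hik : i k = i' k := by
          by_cases hom : om (word i' k) = 0
          · rw [hom] at hi hi'
            have hMf : Mfun 0 = 2 := rfl
            have h2 : i k < 2 := by omega
            have h2' : i' k < 2 := by omega
            have hA : 2 * cw (word i' k) ∈ D (k + 1) ∧
                2 * cw (word i' k) + 1 ∈ D (k + 1) := by
              by_contra hcon
              unfold om at hom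
              rw [word_length] at hom
              by_cases hA' : 2 * cw (word i' k) ∈ D (k + 1)
              · by_cases hB' : 2 * cw (word i' k) + 1 ∈ D (k + 1)
                · exact hcon ⟨hA', hB'⟩
                · rw [if_pos hA', if_neg hB'] at hom; exact absurd hom (by decide)
              · rw [if_neg hA'] at hom; exact absurd hom (by decide)
            have hs : ∀ l, stepBit k (cseq i' k) l = min l 1 := by
              intro l
              unfold stepBit cseq
              rw [if_pos hA.1, if_pos hA.2]
            rw [hs, hs] at hb
            omega
          · have hMf : Mfun (om (word i' k)) = 1 := by
              unfold Mfun; rw [if_neg hom]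
            omega
        rw [word_succ, word_succ, ih, hik]
  funext k
  have := hword (k + 1)
  rw [word_succ, word_succ, hword k] at this
  exact List.singleton_injective (List.append_cancel_left this)

/-- enumeration of all paths -/
def pathAll : ℕ → (ℕ → ℕ)
  | 0 => pathZero
  | n + 1 => pathOf (n + 1)

lemma pathSet_subset_range : pathSet Mfun om ⊆ Set.range pathAll := by
  intro i hi
  rcases path_classify hi with h0 | ⟨n, hn, hc⟩
  · refine ⟨0, ?_⟩
    show pathZero = i
    exact path_unique isPath_pathZero hi (fun k => by rw [cseq_pathZero, h0 k])
  · obtain ⟨m, rfl⟩ : ∃ m, n = m + 1 := ⟨n - 1, by omega⟩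
    refine ⟨m + 1, ?_⟩
    show pathOf (m + 1) = i
    exact path_unique (isPath_pathOf (m + 1)) hi
      (fun k => by rw [cseq_pathOf _ hn, hc k])

lemma pathSet_countable : (pathSet Mfun om).Countable :=
  Set.Countable.mono pathSet_subset_range (Set.countable_range _)

lemma attractor_countable (a : Fin 2 → ℝ) :
    (attractor1 Mfun rfun (trfun a) om).Countable := by
  have : attractor1 Mfun rfun (trfun a) om ⊆
      Set.range (fun n => Z1 rfun (trfun a) om (pathAll n)) := by
    rintro x ⟨i, hi, rfl⟩
    obtain ⟨n, rfl⟩ := pathSet_subset_range hi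
    exact ⟨n, rfl⟩
  exact Set.Countable.mono this (Set.countable_range _)

end PathCon
section Attr

lemma attractor_orig :
    attractor1 Mfun rfun (trfun aOrig) om
      = {0} ∪ {x : ℝ | ∃ n : ℕ, 0 < n ∧ x = 1 / (n : ℝ)} := by
  apply Set.Subset.antisymm
  · rintro x ⟨i, hi, rfl⟩
    rcases path_classify hi with h0 | ⟨n, hn, hc⟩
    · left
      rw [Z1_orig i 0 (cseq_tendsto_zero i h0)]
      rfl
    · right
      exact ⟨n, by omega, Z1_orig i (1 / n) (cseq_tendsto i n hn hc)⟩
  · rintro x (rfl | ⟨n, hn, rfl⟩)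
    · exact ⟨pathZero, isPath_pathZero,
        Z1_orig pathZero 0 (cseq_tendsto_zero pathZero cseq_pathZero)⟩
    · exact ⟨pathOf n, isPath_pathOf n,
        Z1_orig (pathOf n) (1 / n) (cseq_tendsto (pathOf n) n hn (cseq_pathOf n hn))⟩

end Attr
section Press

/-- evaluation of `S1`. -/
lemma S1_eval (k : ℕ) (α : ℝ) :
    S1 Mfun rfun om k α = ((D k).card : ℝ) * ((1 / 2 : ℝ) ^ k) ^ α := by
  haveI : Fintype {w : List ℕ // w.length = k ∧ IsNode Mfun om w} :=
    Fintype.ofEquiv _ (nodeEquiv k).symm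
  unfold S1
  have h1 : ∀ w : {w : List ℕ // w.length = k ∧ IsNode Mfun om w},
      Phi1 (prodc rfun om w.1) α = ((1 / 2 : ℝ) ^ k) ^ α := by
    rintro ⟨w, hw, hn⟩
    unfold Phi1
    rw [prodc_const, hw, abs_of_pos (by positivity)]
  rw [tsum_congr h1, tsum_fintype, Finset.sum_const]
  have hc : Fintype.card {w : List ℕ // w.length = k ∧ IsNode Mfun om w}
      = (D k).card := by
    rw [Fintype.card_congr (nodeEquiv k), Fintype.card_coe]
  simp [hc, mul_comm]

lemma card_D_pos (k : ℕ) : 0 < (D k).card :=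
  Finset.card_pos.2 ⟨0, zero_mem_D k⟩

lemma card_D_le (k : ℕ) : (D k).card ≤ 2 * Nat.sqrt (Mk k) + 1 := by
  set s := Nat.sqrt (Mk k) with hs
  have hsub : D k ⊆ (Finset.Icc 1 s).image (fun n => Mk k / n) ∪ Finset.range (s + 1) := by
    intro d hd
    obtain ⟨n, hn1, hn2, rfl⟩ := mem_D.1 hd
    rcases le_or_gt n s with h | h
    · exact Finset.mem_union_left _ (Finset.mem_image.2 ⟨n, Finset.mem_Icc.2 ⟨hn1, h⟩, rfl⟩)
    · apply Finset.mem_union_right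
      rw [Finset.mem_range]
      rw [Nat.div_lt_iff_lt_mul (by omega)]
      calc Mk k < (s + 1) * (s + 1) := Nat.lt_succ_sqrt (Mk k)
      _ ≤ (s + 1) * n := by apply Nat.mul_le_mul_left; omega
  have h1 : (D k).card ≤
      ((Finset.Icc 1 s).image (fun n => Mk k / n) ∪ Finset.range (s + 1)).card :=
    Finset.card_le_card hsub
  have h2 : ((Finset.Icc 1 s).image (fun n => Mk k / n) ∪ Finset.range (s + 1)).card ≤
      ((Finset.Icc 1 s).image (fun n => Mk k / n)).card + (Finset.range (s + 1)).card :=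
    Finset.card_union_le _ _
  have h3 : ((Finset.Icc 1 s).image (fun n => Mk k / n)).card ≤ (Finset.Icc 1 s).card :=
    Finset.card_image_le
  have h4 : (Finset.Icc 1 s).card = s := by rw [Nat.card_Icc]; omega
  have h5 : (Finset.range (s + 1)).card = s + 1 := Finset.card_range _
  omega

lemma card_D_ge (k : ℕ) : Nat.sqrt (Mk k) ≤ (D k).card := by
  set s := Nat.sqrt (Mk k) with hs
  have hss : s * s ≤ Mk k := Nat.sqrt_le (Mk k)
  have hcons : ∀ n, 1 ≤ n → n + 1 ≤ s → Mk k / (n + 1) + 1 ≤ Mk k / n := by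
    intro n h1 h2
    have hle : n * (n + 1) ≤ Mk k := by nlinarith
    have hq : n ≤ Mk k / (n + 1) := (Nat.le_div_iff_mul_le (by omega)).2 hle
    have hq1 : (Mk k / (n + 1)) * (n + 1) ≤ Mk k := Nat.div_mul_le_self _ _
    have h3 : (Mk k / (n + 1) + 1) * n ≤ Mk k := by nlinarith
    exact (Nat.le_div_iff_mul_le (show 0 < n by omega)).2 h3
  have hmono : ∀ n m, 1 ≤ n → n < m → m ≤ s → Mk k / m < Mk k / n := by
    intro n m h1 h2 h3
    calc Mk k / m ≤ Mk k / (n + 1) := Nat.div_le_div_left h2 (by omega)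
    _ < Mk k / n := hcons n h1 (by omega)
  have hinj : Set.InjOn (fun n => Mk k / n) ↑(Finset.Icc 1 s) := by
    intro a ha b hb hab
    simp only [Finset.coe_Icc, Set.mem_Icc] at ha hb
    have hab' : Mk k / a = Mk k / b := hab
    rcases lt_trichotomy a b with h | h | h
    · exact absurd hab' (by have := hmono a b ha.1 h hb.2; omega)
    · exact h
    · exact absurd hab' (by have := hmono b a hb.1 h ha.2; omega)
  have himg : ((Finset.Icc 1 s).image (fun n => Mk k / n)).card = s := by
    rw [Finset.card_image_of_injOn hinj, Nat.card_Icc]; omega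
  have hsub : (Finset.Icc 1 s).image (fun n => Mk k / n) ⊆ D k := by
    intro d hd
    obtain ⟨n, hn, rfl⟩ := Finset.mem_image.1 hd
    rw [Finset.mem_Icc] at hn
    exact MkDiv_mem_D k n hn.1
  rw [← himg]
  exact Finset.card_le_card hsub

/-- the limit of `log N_k / k`. -/
lemma logcard_tendsto :
    Filter.Tendsto (fun k : ℕ => Real.log ((D k).card : ℝ) / k) atTop
      (nhds (Real.log 2 / 2)) := by
  have h2k : ∀ k : ℕ, (1:ℝ) ≤ (2:ℝ) ^ k := fun k => one_le_pow₀ (by norm_num)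
  have hsqrt1 : ∀ k : ℕ, (1:ℝ) ≤ Real.sqrt ((2:ℝ) ^ k) := fun k =>
    Real.one_le_sqrt.2 (h2k k)
  have hub : ∀ k : ℕ, ((D k).card : ℝ) ≤ 3 * Real.sqrt ((2:ℝ) ^ k) := by
    intro k
    have h1 : ((D k).card : ℝ) ≤ 2 * (Nat.sqrt (Mk k) : ℝ) + 1 := by
      exact_mod_cast card_D_le k
    have h2 : ((Nat.sqrt (Mk k) : ℝ)) ≤ Real.sqrt ((2:ℝ) ^ k) := by
      rw [Real.le_sqrt (by positivity) (by positivity)]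
      have h3 : (Nat.sqrt (Mk k) : ℝ) ^ 2 ≤ (Mk k : ℝ) := by
        exact_mod_cast Nat.sqrt_le' (Mk k)
      have h4 : (Mk k : ℝ) ≤ (2:ℝ) ^ k := by
        exact_mod_cast Nat.sub_le (2 ^ k) 1
      linarith
    have := hsqrt1 k
    linarith
  have hlb : ∀ k : ℕ, 2 ≤ k → Real.sqrt ((2:ℝ) ^ k) / 2 ≤ ((D k).card : ℝ) := by
    intro k hk
    have hMk1 : (Mk k : ℕ) + 1 = 2 ^ k := by
      have := Nat.one_le_two_pow (n := k); simp only [Mk]; omega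
    have h5 : (2:ℝ) ^ k = (Mk k : ℝ) + 1 := by exact_mod_cast hMk1.symm
    have h4n : 2 ^ k ≤ ((Nat.sqrt (Mk k)) + 1) ^ 2 := by
      have hlt := Nat.lt_succ_sqrt (Mk k)
      rw [Nat.succ_eq_add_one] at hlt
      have hp : ((Mk k).sqrt + 1) * ((Mk k).sqrt + 1) = ((Mk k).sqrt + 1) ^ 2 := by ring
      omega
    have h4 : (2:ℝ) ^ k ≤ ((Nat.sqrt (Mk k) : ℝ) + 1) ^ 2 := by
      exact_mod_cast h4n
    have h6 : Real.sqrt ((2:ℝ) ^ k) ≤ (Nat.sqrt (Mk k) : ℝ) + 1 := by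
      calc Real.sqrt ((2:ℝ) ^ k) ≤ Real.sqrt (((Nat.sqrt (Mk k) : ℝ) + 1) ^ 2) :=
            Real.sqrt_le_sqrt h4
      _ = (Nat.sqrt (Mk k) : ℝ) + 1 := Real.sqrt_sq (by positivity)
    have h7 : (2:ℝ) ≤ Real.sqrt ((2:ℝ) ^ k) := by
      have h8 : (4:ℝ) ≤ (2:ℝ) ^ k := by
        calc (4:ℝ) = 2 ^ 2 := by norm_num
        _ ≤ 2 ^ k := pow_le_pow_right₀ (by norm_num) hk
      calc (2:ℝ) = Real.sqrt 4 := by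
            rw [show (4:ℝ) = 2 ^ 2 by norm_num, Real.sqrt_sq (by norm_num)]
      _ ≤ Real.sqrt ((2:ℝ) ^ k) := Real.sqrt_le_sqrt h8
    have h9 : (Nat.sqrt (Mk k) : ℝ) ≤ ((D k).card : ℝ) := by
      exact_mod_cast card_D_ge k
    linarith
  have hg1 : Filter.Tendsto (fun k : ℕ => Real.log 2 / 2 - Real.log 2 / k) atTop
      (nhds (Real.log 2 / 2)) := by
    have h := tendsto_const_nhds (x := Real.log 2 / 2) (f := atTop (α := ℕ)) |>.sub
      (tendsto_const_div_atTop_nhds_zero_nat (Real.log 2))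
    simpa using h
  have hg2 : Filter.Tendsto (fun k : ℕ => Real.log 2 / 2 + Real.log 3 / k) atTop
      (nhds (Real.log 2 / 2)) := by
    have h := tendsto_const_nhds (x := Real.log 2 / 2) (f := atTop (α := ℕ)) |>.add
      (tendsto_const_div_atTop_nhds_zero_nat (Real.log 3))
    simpa using h
  apply tendsto_of_tendsto_of_tendsto_of_le_of_le' hg1 hg2
  · filter_upwards [Filter.eventually_ge_atTop 2] with k hk
    have hkpos : (0:ℝ) < (k:ℝ) := by
      have : (2:ℝ) ≤ (k:ℝ) := by exact_mod_cast hk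
      linarith
    have hlog : (k : ℝ) * Real.log 2 / 2 - Real.log 2 ≤ Real.log ((D k).card : ℝ) := by
      have h := Real.log_le_log (by positivity) (hlb k hk)
      rwa [Real.log_div (by positivity) (by norm_num), Real.log_sqrt (by positivity),
        Real.log_pow] at h
    have heq : Real.log 2 / 2 - Real.log 2 / k
        = ((k : ℝ) * Real.log 2 / 2 - Real.log 2) / k := by
      field_simp
    rw [heq]
    gcongr
  · filter_upwards [Filter.eventually_ge_atTop 2] with k hk
    have hkpos : (0:ℝ) < (k:ℝ) := by
      have : (2:ℝ) ≤ (k:ℝ) := by exact_mod_cast hk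
      linarith
    have hcard : (0:ℝ) < ((D k).card : ℝ) := by exact_mod_cast card_D_pos k
    have hlog : Real.log ((D k).card : ℝ) ≤ Real.log 3 + (k : ℝ) * Real.log 2 / 2 := by
      have h := Real.log_le_log hcard (hub k)
      rwa [Real.log_mul (by norm_num) (by positivity), Real.log_sqrt (by positivity),
        Real.log_pow] at h
    have heq : Real.log 2 / 2 + Real.log 3 / k
        = (Real.log 3 + (k : ℝ) * Real.log 2 / 2) / k := by
      field_simp
      ring
    rw [heq]
    gcongr

/-- the pressure function. -/
def press (α : ℝ) : ℝ := Real.log 2 / 2 - α * Real.log 2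

lemma S1_tendsto (α : ℝ) :
    Filter.Tendsto (fun k : ℕ => Real.log (S1 Mfun rfun om k α) / k) atTop
      (nhds (press α)) := by
  have hcongr : ∀ k : ℕ, 1 ≤ k → Real.log (S1 Mfun rfun om k α) / k
      = Real.log ((D k).card : ℝ) / k + (-(α * Real.log 2)) := by
    intro k hk
    have hkpos : (0:ℝ) < (k:ℝ) := by exact_mod_cast hk
    have hcard : (0:ℝ) < ((D k).card : ℝ) := by exact_mod_cast card_D_pos k
    have hrpos : (0:ℝ) < ((1 / 2 : ℝ) ^ k) := by positivity
    rw [S1_eval, Real.log_mul (ne_of_gt hcard) (ne_of_gt (Real.rpow_pos_of_pos hrpos α)),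
      Real.log_rpow hrpos, Real.log_pow]
    have hl : Real.log (1 / 2 : ℝ) = -Real.log 2 := by
      rw [one_div, Real.log_inv]
    rw [hl]
    field_simp
  have h1 : Filter.Tendsto (fun k : ℕ => Real.log ((D k).card : ℝ) / k + (-(α * Real.log 2)))
      atTop (nhds (Real.log 2 / 2 + (-(α * Real.log 2)))) :=
    logcard_tendsto.add tendsto_const_nhds
  have h2 : press α = Real.log 2 / 2 + (-(α * Real.log 2)) := by unfold press; ring
  rw [h2]
  apply Filter.Tendsto.congr' _ h1
  filter_upwards [Filter.eventually_ge_atTop 1] with k hk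
  exact (hcongr k hk).symm

lemma press_half : press (1 / 2) = 0 := by unfold press; ring

lemma press_zero_unique (α : ℝ) (h : press α = 0) : α = 1 / 2 := by
  have hl : (0:ℝ) < Real.log 2 := Real.log_pos (by norm_num)
  unfold press at h
  have : α * Real.log 2 = (1/2) * Real.log 2 := by linarith
  exact mul_right_cancel₀ (ne_of_gt hl) this

end Press
section Dim

lemma covNum_le_one_of_singleton (x : ℝ) {ε : ℝ} (hε : 0 ≤ ε) :
    covNum {x} ε ≤ 1 := by
  have hcover : ({x} : Set ℝ) ⊆ ⋃ c ∈ ({x} : Finset ℝ), Metric.closedBall c ε := by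
    intro y hy
    rcases hy with rfl
    simp only [Finset.mem_singleton, Set.iUnion_iUnion_eq_left]
    exact Metric.mem_closedBall_self hε
  calc covNum {x} ε ≤ (({x} : Finset ℝ).card : ℝ≥0∞) := by
        unfold covNum
        exact iInf₂_le ({x} : Finset ℝ) hcover
  _ = 1 := by simp

lemma one_le_covNum {A : Set ℝ} (hA : A.Nonempty) (ε : ℝ) : 1 ≤ covNum A ε := by
  unfold covNum
  refine le_iInf fun s => le_iInf fun hs => ?_
  obtain ⟨y, hy⟩ := hA
  have := hs hy
  simp only [Set.mem_iUnion] at this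
  obtain ⟨c, hc, _⟩ := this
  have : 0 < s.card := Finset.card_pos.2 ⟨c, hc⟩
  exact_mod_cast Nat.one_le_cast.2 this

lemma covNum_empty (ε : ℝ) : covNum (∅ : Set ℝ) ε = 0 := by
  apply le_antisymm _ (zero_le)
  calc covNum ∅ ε ≤ ((∅ : Finset ℝ).card : ℝ≥0∞) := by
        unfold covNum
        exact iInf₂_le (∅ : Finset ℝ) (by simp)
  _ = 0 := by simp

lemma covNum_singleton (x : ℝ) {ε : ℝ} (hε : 0 ≤ ε) : covNum {x} ε = 1 :=
  le_antisymm (covNum_le_one_of_singleton x hε) (one_le_covNum (Set.singleton_nonempty x) ε)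

lemma log_covNum_nonneg (A : Set ℝ) (ε : ℝ) :
    0 ≤ Real.log ((covNum A ε).toReal) := by
  rcases Set.eq_empty_or_nonempty A with rfl | hA
  · rw [covNum_empty]
    simp
  · by_cases htop : covNum A ε = ⊤
    · rw [htop]; simp
    · have h1 : (1:ℝ) ≤ (covNum A ε).toReal := by
        rw [← ENNReal.toReal_one]
        exact ENNReal.toReal_mono htop (one_le_covNum hA ε)
      exact Real.log_nonneg h1

lemma uboxDim_nonneg (A : Set ℝ) : 0 ≤ uboxDim A := by
  unfold uboxDim
  rw [Filter.limsup_eq]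
  apply Real.sInf_nonneg
  intro a ha
  simp only [Set.mem_setOf_eq] at ha
  have hIoo : ∀ᶠ ε in nhdsWithin (0:ℝ) (Set.Ioi 0), ε ∈ Set.Ioo (0:ℝ) 1 :=
    Ioo_mem_nhdsGT_of_mem (by norm_num : (0:ℝ) ∈ Set.Ico (0:ℝ) 1)
  have hnn : ∀ᶠ ε in nhdsWithin (0:ℝ) (Set.Ioi 0),
      0 ≤ Real.log ((covNum A ε).toReal) / -Real.log ε := by
    filter_upwards [hIoo] with ε hε
    have hlog : Real.log ε < 0 := Real.log_neg hε.1 hε.2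
    exact div_nonneg (log_covNum_nonneg A ε) (by linarith)
  obtain ⟨ε, h1, h2⟩ := (hnn.and ha).exists
  linarith

lemma uboxDim_zero_of_subsingleton {A : Set ℝ} (hA : A.Subsingleton) : uboxDim A = 0 := by
  unfold uboxDim
  have hIoo : ∀ᶠ ε in nhdsWithin (0:ℝ) (Set.Ioi 0), ε ∈ Set.Ioo (0:ℝ) 1 :=
    Ioo_mem_nhdsGT_of_mem (by norm_num : (0:ℝ) ∈ Set.Ico (0:ℝ) 1)
  have hcongr : ∀ᶠ ε in nhdsWithin (0:ℝ) (Set.Ioi 0),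
      Real.log ((covNum A ε).toReal) / -Real.log ε = 0 := by
    filter_upwards [hIoo] with ε hε
    rcases Set.eq_empty_or_nonempty A with rfl | ⟨x, hx⟩
    · rw [covNum_empty]; simp
    · have hAx : A = {x} := Set.eq_singleton_iff_nonempty_unique_mem.2
        ⟨⟨x, hx⟩, fun y hy => hA hy hx⟩
      rw [hAx, covNum_singleton x (le_of_lt hε.1)]
      simp
  rw [Filter.limsup_congr hcongr]
  exact Filter.limsup_const 0

/-- packing dimension of a countable set vanishes. -/
lemma packingDim_countable {A : Set ℝ} (hA : A.Countable) : packingDim A = 0 := by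
  have hmem : (0:ℝ) ∈ {s : ℝ | ∃ Es : ℕ → Set ℝ, (∀ n, Bornology.IsBounded (Es n)) ∧
      A ⊆ ⋃ n, Es n ∧ ∀ n, uboxDim (Es n) ≤ s} := by
    rcases Set.eq_empty_or_nonempty A with rfl | hne
    · exact ⟨fun _ => ∅, fun _ => Bornology.isBounded_empty, by simp,
        fun n => le_of_eq (uboxDim_zero_of_subsingleton Set.subsingleton_empty)⟩
    · obtain ⟨f, hf⟩ := hA.exists_eq_range hne
      refine ⟨fun n => {f n}, fun n => Bornology.isBounded_singleton, ?_, ?_⟩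
      · rw [hf]
        intro x hx
        obtain ⟨n, rfl⟩ := hx
        exact Set.mem_iUnion.2 ⟨n, rfl⟩
      · exact fun n => le_of_eq (uboxDim_zero_of_subsingleton (Set.subsingleton_singleton))
  have hlb : ∀ s ∈ {s : ℝ | ∃ Es : ℕ → Set ℝ, (∀ n, Bornology.IsBounded (Es n)) ∧
      A ⊆ ⋃ n, Es n ∧ ∀ n, uboxDim (Es n) ≤ s}, (0:ℝ) ≤ s := by
    rintro s ⟨Es, _, _, hEs⟩
    exact le_trans (uboxDim_nonneg (Es 0)) (hEs 0)
  unfold packingDim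
  exact le_antisymm (csInf_le ⟨0, hlb⟩ hmem) (le_csInf ⟨0, hmem⟩ hlb)

end Dim
/-- Example `pressure3`: with `f₀ = x/2`, `f₁ = x/2 + 1/2`,
`F¹ = {f₀, f₁}` (label `0`), `F² = {f₀}` (label `1`), `F³ = {f₁}` (label `2`), the
translations identified so that the data is `a ∈ ℝ²`, there is a code tree `ω` whose
attractor at the original parameter `a = (0, 1/2)` is `{0} ∪ {1/n : n ∈ ℕ}`, whose
pressure exists for all `α ≥ 0` with unique zero `1/2`, while for every `a ∈ ℝ²` the
attractor is countable, so its Hausdorff and packing dimensions vanish. -/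
theorem statement7 :
    ∃ ω : List ℕ → Fin 3,
      (attractor1 (fun l : Fin 3 => if l = 0 then 2 else 1) (fun _ _ => (1 : ℝ) / 2)
          (fun l i =>
            (![0, 1 / 2] : Fin 2 → ℝ)
              (if l = 0 then (if i = 0 then 0 else 1) else if l = 1 then 0 else 1)) ω)
        = {0} ∪ {x : ℝ | ∃ n : ℕ, 0 < n ∧ x = 1 / (n : ℝ)} ∧
      (∃ press : ℝ → ℝ,
        (∀ α : ℝ, 0 ≤ α →
          Tendsto
            (fun k : ℕ =>
              Real.log (S1 (fun l : Fin 3 => if l = 0 then 2 else 1)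
                (fun _ _ => (1 : ℝ) / 2) ω k α) / k)
            atTop (nhds (press α))) ∧
        press (1 / 2) = 0 ∧ ∀ α : ℝ, 0 ≤ α → press α = 0 → α = 1 / 2) ∧
      ∀ a : Fin 2 → ℝ,
        (attractor1 (fun l : Fin 3 => if l = 0 then 2 else 1) (fun _ _ => (1 : ℝ) / 2)
            (fun l i =>
              a (if l = 0 then (if i = 0 then 0 else 1) else if l = 1 then 0 else 1))
            ω).Countable ∧
        dimH (attractor1 (fun l : Fin 3 => if l = 0 then 2 else 1)
            (fun _ _ => (1 : ℝ) / 2)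
            (fun l i =>
              a (if l = 0 then (if i = 0 then 0 else 1) else if l = 1 then 0 else 1))
            ω) = 0 ∧
        packingDim (attractor1 (fun l : Fin 3 => if l = 0 then 2 else 1)
            (fun _ _ => (1 : ℝ) / 2)
            (fun l i =>
              a (if l = 0 then (if i = 0 then 0 else 1) else if l = 1 then 0 else 1))
            ω) = 0 := by
  refine ⟨om, ?_, ⟨press, fun α _ => ?_, press_half, fun α _ h => press_zero_unique α h⟩,
    fun a => ⟨?_, ?_, ?_⟩⟩
  · exact attractor_orig
  · exact S1_tendsto α
  · exact attractor_countable a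
  · exact dimH_countable (attractor_countable a)
  · exact packingDim_countable (attractor_countable a)

end CodeTreeFractal
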